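/- Let m ≥ 1 and let G₁, …, G_m be simple graphs and k₁, …, k_m natural numbers such that each G_i is k_i-Ramsey. Then the iterated Naor product G₁ · (G₂ · ( ⋯ · G_m)) is (k₁·k₂···k_m)-Ramsey. -/

import Mathlib

universe u

/-- The Naor product of two simple graphs: vertices `(u₁,u₂)` and `(v₁,v₂)` are adjacent
iff `u₁` is adjacent to `v₁` in `G₁`, or `u₁ = v₁` and `u₂` is adjacent to `v₂` in `G₂`. -/
def naorProd {V₁ V₂ : Type*} (G₁ : SimpleGraph V₁) (G₂ : SimpleGraph V₂) :
    SimpleGraph (V₁ × V₂) where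
  Adj x y := G₁.Adj x.1 y.1 ∨ (x.1 = y.1 ∧ G₂.Adj x.2 y.2)
  symm := by
    constructor
    rintro ⟨u₁, u₂⟩ ⟨v₁, v₂⟩ (h | ⟨h₁, h₂⟩)
    · exact Or.inl h.symm
    · exact Or.inr ⟨h₁.symm, h₂.symm⟩
  loopless := by
    constructor
    rintro ⟨u₁, u₂⟩ (h | ⟨-, h⟩)
    · exact G₁.irrefl h
    · exact G₂.irrefl h

/-- The vertex type of the iterated (right-folded) Naor product of `m+1` graphs. -/
def naorVertex : (m : ℕ) → (Fin (m + 1) → Type u) → Type u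
  | 0, V => V 0
  | m + 1, V => V 0 × naorVertex m (fun i => V i.succ)

/-- The iterated (right-folded) Naor product `G₀ · (G₁ · ( ⋯ · G_m))` of `m+1` graphs. -/
def iterNaorProd : (m : ℕ) → (V : Fin (m + 1) → Type u) →
    ((i : Fin (m + 1)) → SimpleGraph (V i)) → SimpleGraph (naorVertex m V)
  | 0, _, G => G 0
  | m + 1, V, G => naorProd (G 0) (iterNaorProd m (fun i => V i.succ) (fun i => G i.succ))

/-- A simple graph is `k`-Ramsey if it has no clique of size `k` and no
independent set of size `k`. -/
def IsRamsey {V : Type*} (G : SimpleGraph V) (k : ℕ) : Prop :=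
  G.CliqueFree k ∧ Gᶜ.CliqueFree k

/-- Auxiliary: a clique in a `CliqueFree n` graph has fewer than `n` vertices. -/
lemma clique_card_lt' {V : Type*} {G : SimpleGraph V} {n : ℕ} (h : G.CliqueFree n)
    {s : Finset V} (hs : G.IsClique s) : s.card < n := by
  by_contra hc
  push_neg at hc
  obtain ⟨t, hts, ht⟩ := Finset.exists_subset_card_eq hc
  exact h t ⟨hs.subset hts, ht⟩

/-- Auxiliary: the complement of a Naor product is the Naor product of the complements. -/
lemma compl_naorProd' {V₁ V₂ : Type*} (G₁ : SimpleGraph V₁) (G₂ : SimpleGraph V₂) :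
    (naorProd G₁ G₂)ᶜ = naorProd G₁ᶜ G₂ᶜ := by
  ext ⟨x₁, x₂⟩ ⟨y₁, y₂⟩
  simp only [SimpleGraph.compl_adj, naorProd, ne_eq, Prod.mk.injEq, not_and, not_or]
  by_cases he : x₁ = y₁ <;> subst_vars <;> simp_all

/-- Auxiliary: the Naor product of clique-free graphs is clique-free. -/
lemma naorProd_cliqueFree' {V₁ V₂ : Type*} {G₁ : SimpleGraph V₁} {G₂ : SimpleGraph V₂}
    {a b : ℕ} (h₁ : G₁.CliqueFree a) (h₂ : G₂.CliqueFree b) :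
    (naorProd G₁ G₂).CliqueFree (a * b) := by
  classical
  intro s hs
  -- the image of the first projection is a clique in G₁
  have hT : G₁.IsClique (s.image Prod.fst) := by
    intro x hx y hy hxy
    simp only [Finset.coe_image, Set.mem_image] at hx hy
    obtain ⟨u, hu, rfl⟩ := hx
    obtain ⟨v, hv, rfl⟩ := hy
    have huv : u ≠ v := fun e => hxy (e ▸ rfl)
    rcases hs.1 hu hv huv with hadj | ⟨heq, _⟩
    · exact hadj
    · exact absurd heq hxy
  have hTcard : (s.image Prod.fst).card < a := clique_card_lt' h₁ hT
  -- each fiber has size at most b - 1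
  have hfiber : ∀ t ∈ s.image Prod.fst,
      (s.filter (fun x => x.1 = t)).card ≤ b - 1 := by
    intro t _
    set fib := s.filter (fun x => x.1 = t) with hf
    have hinj : Set.InjOn Prod.snd (fib : Set (V₁ × V₂)) := by
      intro x hx y hy hxy
      simp only [hf, Finset.coe_filter, Set.mem_setOf_eq] at hx hy
      exact Prod.ext (hx.2.trans hy.2.symm) hxy
    have hclique : G₂.IsClique (fib.image Prod.snd) := by
      intro x hx y hy hxy
      simp only [Finset.coe_image, Set.mem_image] at hx hy
      obtain ⟨u, hu, rfl⟩ := hx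
      obtain ⟨v, hv, rfl⟩ := hy
      simp only [hf, Finset.mem_coe, Finset.mem_filter] at hu hv
      have huv : u ≠ v := fun e => hxy (e ▸ rfl)
      rcases hs.1 hu.1 hv.1 huv with hadj | ⟨_, hadj⟩
      · exact absurd (hu.2.trans hv.2.symm) (G₁.ne_of_adj hadj)
      · exact hadj
    have := clique_card_lt' h₂ hclique
    rw [Finset.card_image_of_injOn hinj] at this
    omega
  have hcard : s.card ≤ (b - 1) * (s.image Prod.fst).card :=
    Finset.card_le_mul_card_image s (b - 1) hfiber
  have hb : 0 < b := by
    rcases Nat.eq_zero_or_pos b with rfl | hb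
    · exact absurd ⟨by simp [SimpleGraph.IsClique], rfl⟩ (h₂ ∅)
    · exact hb
  obtain ⟨a', rfl⟩ : ∃ a', a = a' + 1 := ⟨a - 1, by omega⟩
  obtain ⟨b', rfl⟩ : ∃ b', b = b' + 1 := ⟨b - 1, by omega⟩
  simp only [Nat.add_sub_cancel] at hcard
  have hsc := hs.2
  nlinarith [hTcard, hcard, hsc]

/-- If `G i` is `k i`-Ramsey for each of the `m+1` graphs `G 0, …, G m`, then their
iterated Naor product is `(∏ i, k i)`-Ramsey. -/
theorem iterNaorProd_isRamsey (m : ℕ) (V : Fin (m + 1) → Type u)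
    (G : (i : Fin (m + 1)) → SimpleGraph (V i)) (k : Fin (m + 1) → ℕ)
    (h : ∀ i, IsRamsey (G i) (k i)) :
    IsRamsey (iterNaorProd m V G) (∏ i, k i) := by
  induction m with
  | zero =>
    rw [Fin.prod_univ_succ, Fin.prod_univ_zero, mul_one]
    exact h 0
  | succ n ih =>
    have hrest := ih (fun i => V i.succ) (fun i => G i.succ) (fun i => k i.succ)
      (fun i => h i.succ)
    rw [Fin.prod_univ_succ]
    constructor
    · exact naorProd_cliqueFree' (h 0).1 hrest.1
    · show (naorProd (G 0) (iterNaorProd n _ _))ᶜ.CliqueFree _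
      rw [compl_naorProd']
      exact naorProd_cliqueFree' (h 0).2 hrest.2
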